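/- For every ε > 0 and every x ∈ ℝ, one has 0 < 1/L_ε'(x) ≤ |x| + 2. (In particular ρ_ε(1) = 1, so that 1/L_ε'(1) = (1 + ε)/(1 + ε + ε²) ≤ 1, and the bound follows from the 1-Lipschitz continuity of 1/L_ε'.) -/

import Mathlib

open Real Set

/-- For every ε > 0 and every x ∈ ℝ, one has `0 < 1/L_ε'(x) ≤ |x| + 2`,
where `L_ε(y) = ε·y + (y − ρ_ε(y))/ε` and ρ_ε is the ε-resolvent of the logarithm. -/
theorem stmt10 (ε : ℝ) (hε : 0 < ε) (ρ : ℝ → ℝ)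
    (hρ : ∀ x : ℝ, 0 < ρ x ∧ ρ x + ε * Real.log (ρ x) = x) (x : ℝ) :
    0 < 1 / deriv (fun z : ℝ => ε * z + (z - ρ z) / ε) x ∧
    1 / deriv (fun z : ℝ => ε * z + (z - ρ z) / ε) x ≤ |x| + 2 := by
  set f : ℝ → ℝ := fun y => y + ε * Real.log y with hf
  -- f is strictly monotone on Ioi 0
  have hfmono : StrictMonoOn f (Ioi (0:ℝ)) := by
    intro a ha b hb hab
    have : Real.log a < Real.log b := Real.log_lt_log ha hab
    have := mul_lt_mul_of_pos_left this hε
    simp only [hf]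
    linarith
  -- ρ is strictly monotone
  have hρmono : StrictMono ρ := by
    intro a b hab
    by_contra h
    push_neg at h
    have : f (ρ b) ≤ f (ρ a) := by
      rcases eq_or_lt_of_le h with h' | h'
      · rw [h']
      · exact le_of_lt (hfmono (hρ b).1 (hρ a).1 h')
    have hfa : f (ρ a) = a := (hρ a).2
    have hfb : f (ρ b) = b := (hρ b).2
    rw [hfa, hfb] at this
    linarith
  -- range of ρ contains Ioi 0
  have hrange : Ioi (0:ℝ) ⊆ range ρ := by
    intro t ht
    refine ⟨f t, ?_⟩
    have h1 : f (ρ (f t)) = f t := (hρ (f t)).2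
    have := hfmono.injOn (hρ (f t)).1 ht h1
    exact this
  -- ρ is continuous at x
  have hcont : ContinuousAt ρ x := by
    apply StrictMonoOn.continuousAt_of_image_mem_nhds (s := univ)
      (fun a _ b _ hab => hρmono hab) Filter.univ_mem
    have : Ioi (0:ℝ) ⊆ ρ '' univ := by
      rw [image_univ]; exact hrange
    exact Filter.mem_of_superset (Ioi_mem_nhds (hρ x).1) this
  set t := ρ x with htdef
  have ht0 : 0 < t := (hρ x).1
  -- f has derivative 1 + ε / t at t
  have hfd : HasDerivAt f (1 + ε * (1 / t)) t := by
    have h1 : HasDerivAt Real.log (1 / t) t := by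
      simpa [one_div] using Real.hasDerivAt_log (ne_of_gt ht0)
    exact (hasDerivAt_id' t).add (h1.const_mul ε)
  have hfd' : (1 + ε * (1 / t)) ≠ 0 := by positivity
  -- ρ has derivative at x
  have hρd : HasDerivAt ρ (1 + ε * (1 / t))⁻¹ x :=
    HasDerivAt.of_local_left_inverse hcont hfd hfd'
      (Filter.Eventually.of_forall fun y => (hρ y).2)
  -- L has derivative at x
  have hLd : HasDerivAt (fun z : ℝ => ε * z + (z - ρ z) / ε)
      (ε * 1 + (1 - (1 + ε * (1 / t))⁻¹) / ε) x := by
    exact ((hasDerivAt_id x).const_mul ε).add (((hasDerivAt_id x).sub hρd).div_const ε)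
  -- simplify the derivative value
  have hderiv : deriv (fun z : ℝ => ε * z + (z - ρ z) / ε) x = ε + 1 / (t + ε) := by
    rw [hLd.deriv]
    have ht0' : t ≠ 0 := ne_of_gt ht0
    have hε' : ε ≠ 0 := ne_of_gt hε
    have hte : t + ε ≠ 0 := by positivity
    field_simp
    ring
  rw [hderiv]
  have hD : 0 < ε + 1 / (t + ε) := by positivity
  constructor
  · positivity
  · -- 1 / (ε + 1/(t+ε)) = (t+ε) / (ε(t+ε)+1)
    have hte : 0 < t + ε := by positivity
    have key : 1 / (ε + 1 / (t + ε)) = (t + ε) / (ε * (t + ε) + 1) := by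
      rw [div_eq_div_iff (ne_of_gt hD) (by positivity)]
      field_simp
    rw [key]
    have hb : 0 < ε * (t + ε) + 1 := by positivity
    rcases le_or_gt 1 ε with hε1 | hε1
    · -- ratio ≤ 1/ε ≤ 1 ≤ |x| + 2
      have h1 : (t + ε) / (ε * (t + ε) + 1) ≤ 1 / ε := by
        rw [div_le_div_iff₀ hb hε]
        nlinarith
      have h2 : (1:ℝ) / ε ≤ 1 := by
        rw [div_le_one hε]; exact hε1
      have := abs_nonneg x
      linarith
    · -- ε < 1 : ratio ≤ t + ε
      have h1 : (t + ε) / (ε * (t + ε) + 1) ≤ t + ε := by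
        rw [div_le_iff₀ hb]
        nlinarith [mul_nonneg hε.le (sq_nonneg (t + ε))]
      rcases le_or_gt t 1 with ht1 | ht1
      · have := abs_nonneg x
        linarith
      · -- t > 1 : x = t + ε log t ≥ t, so |x| ≥ t
        have hlog : 0 ≤ Real.log t := Real.log_nonneg (le_of_lt ht1)
        have hx : t ≤ x := by
          have := (hρ x).2
          nlinarith
        have hxabs : t ≤ |x| := le_trans hx (le_abs_self x)
        linarith
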